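/- Let W^n = (W_1,…,W_n) be random variables each taking values in a finite alphabet 𝒲, and suppose ‖P_{W^n} − ∏_{t=1}^n Q_W‖_TV = ε for some pmf Q_W on 𝒲 and ε ∈ (0,1/4). Then Σ_{t=1}^n I(W_t ; W^{t−1}) ≤ n·g(ε), where g(ε) = 4ε·log(|𝒲|/ε). In the paper's application, W_t = (X_t,Y_t,Z_t), 𝒲 = 𝒳×𝒴×𝒵, and Q_W = Q_X Q_{YZ|X}, giving Σ_{t=1}^n I(X_t,Y_t,Z_t ; X^{t−1},Y^{t−1},Z^{t−1}) ≤ n·g(ε) with g(ε) = 4ε·log(|𝒳||𝒴||𝒵|/ε). -/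

import Mathlib

open scoped BigOperators
open Finset Filter

noncomputable section

/-- `p` is a probability mass function on the finite type `α`. -/
def IsPmf {α : Type} [Fintype α] (p : α → ℝ) : Prop :=
  (∀ a, 0 ≤ p a) ∧ ∑ a, p a = 1

/-- Total variation distance `‖p − q‖_TV = (1/2) Σ |p − q|`. -/
def TV {α : Type} [Fintype α] (p q : α → ℝ) : ℝ :=
  (∑ a, |p a - q a|) / 2

/-- The distribution (law) of the random variable `f` when the underlying
probability mass function is `p`. -/
def lawOf {Ω α : Type} [Fintype Ω] [DecidableEq α]
    (p : Ω → ℝ) (f : Ω → α) : α → ℝ :=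
  fun a => ∑ ω, if f ω = a then p ω else 0

/-- Shannon entropy (base 2) of a pmf on a finite type. -/
def H2 {α : Type} [Fintype α] (p : α → ℝ) : ℝ :=
  -∑ a, p a * Real.logb 2 (p a)

/-- Entropy `H(X)` of a random variable `X` under the pmf `p`. -/
def ent {Ω α : Type} [Fintype Ω] [Fintype α] [DecidableEq α]
    (p : Ω → ℝ) (X : Ω → α) : ℝ :=
  H2 (lawOf p X)

/-- Mutual information `I(X;Y)` under the pmf `p`. -/
def mi {Ω α β : Type} [Fintype Ω] [Fintype α] [Fintype β]
    [DecidableEq α] [DecidableEq β]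
    (p : Ω → ℝ) (X : Ω → α) (Y : Ω → β) : ℝ :=
  ent p X + ent p Y - ent p (fun ω => (X ω, Y ω))

/-- Conditional mutual information `I(X;Y|W)` under the pmf `p`. -/
def cmi {Ω α β γ : Type} [Fintype Ω] [Fintype α] [Fintype β] [Fintype γ]
    [DecidableEq α] [DecidableEq β] [DecidableEq γ]
    (p : Ω → ℝ) (X : Ω → α) (Y : Ω → β) (W : Ω → γ) : ℝ :=
  ent p (fun ω => (X ω, W ω)) + ent p (fun ω => (Y ω, W ω))
    - ent p (fun ω => (X ω, Y ω, W ω)) - ent p W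

/-- `X` and `Y` are conditionally independent given `W` under `p`
(the Markov chain `X − W − Y`). -/
def CondIndep {Ω α β γ : Type} [Fintype Ω] [Fintype α] [Fintype β] [Fintype γ]
    [DecidableEq α] [DecidableEq β] [DecidableEq γ]
    (p : Ω → ℝ) (X : Ω → α) (Y : Ω → β) (W : Ω → γ) : Prop :=
  ∀ x y w,
    lawOf p (fun ω => (X ω, Y ω, W ω)) (x, y, w) * lawOf p W w
      = lawOf p (fun ω => (X ω, W ω)) (x, w) * lawOf p (fun ω => (Y ω, W ω)) (y, w)

/-- `X` and `Y` are independent under `p`. -/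
def IndepRV {Ω α β : Type} [Fintype Ω] [Fintype α] [Fintype β]
    [DecidableEq α] [DecidableEq β]
    (p : Ω → ℝ) (X : Ω → α) (Y : Ω → β) : Prop :=
  ∀ a b, lawOf p (fun ω => (X ω, Y ω)) (a, b) = lawOf p X a * lawOf p Y b



section AuxAnalytic
open Real


/-- subadditivity of negMulLog -/
lemma eta_subadd {x d : ℝ} (hx : 0 ≤ x) (hd : 0 ≤ d) (hxd : x + d ≤ 1) :
    negMulLog (x + d) ≤ negMulLog x + negMulLog d := by
  have h1 : x * (-Real.log (x + d)) ≤ x * (-Real.log x) := by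
    rcases eq_or_lt_of_le hx with h | h
    · simp [← h]
    · exact mul_le_mul_of_nonneg_left
        (neg_le_neg (Real.log_le_log h (by linarith))) hx
  have h2 : d * (-Real.log (x + d)) ≤ d * (-Real.log d) := by
    rcases eq_or_lt_of_le hd with h | h
    · simp [← h]
    · exact mul_le_mul_of_nonneg_left
        (neg_le_neg (Real.log_le_log h (by linarith))) hd
  have e1 : negMulLog (x + d) = x * (-Real.log (x + d)) + d * (-Real.log (x + d)) := by
    simp [Real.negMulLog]; ring
  have e2 : negMulLog x = x * (-Real.log x) := by rw [Real.negMulLog]; ring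
  have e3 : negMulLog d = d * (-Real.log d) := by rw [Real.negMulLog]; ring
  rw [e1, e2, e3]; linarith

/-- η(1-d) ≤ η(d) for d ∈ [0,1/2], via concavity of φ(d)=η(d)-η(1-d). -/
lemma eta_one_sub_le {d : ℝ} (hd0 : 0 ≤ d) (hd : d ≤ 1/2) :
    negMulLog (1 - d) ≤ negMulLog d := by
  set φ : ℝ → ℝ := fun x => negMulLog x - negMulLog (1 - x) with hφdef
  have hderiv : ∀ x ∈ Set.Ioo (0:ℝ) (1/2), HasDerivAt φ (-Real.log x - Real.log (1-x) - 2) x := by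
    intro x hx
    have hx0 : x ≠ 0 := ne_of_gt hx.1
    have hx1 : (1:ℝ) - x ≠ 0 := ne_of_gt (by nlinarith [hx.2] : (0:ℝ) < 1 - x)
    have h1 : HasDerivAt negMulLog (-Real.log x - 1) x := hasDerivAt_negMulLog hx0
    have hin : HasDerivAt (fun y : ℝ => 1 - y) (-1) x := by
      simpa using (hasDerivAt_id x).const_sub 1
    have h2 : HasDerivAt (fun y => negMulLog (1 - y)) ((-Real.log (1-x) - 1) * (-1)) x :=
      (hasDerivAt_negMulLog hx1).comp x hin
    have := h1.sub h2
    exact this.congr_deriv (by ring)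
  have hcont : ContinuousOn φ (Set.Icc (0:ℝ) (1/2)) := by
    apply Continuous.continuousOn
    fun_prop
  have hint : interior (Set.Icc (0:ℝ) (1/2)) = Set.Ioo (0:ℝ) (1/2) := interior_Icc
  have hconc : ConcaveOn ℝ (Set.Icc (0:ℝ) (1/2)) φ := by
    apply AntitoneOn.concaveOn_of_deriv (convex_Icc _ _) hcont
    · rw [hint]
      intro x hx
      exact ((hderiv x hx).differentiableAt).differentiableWithinAt
    · rw [hint]
      intro x hx y hy hxy
      rw [(hderiv x hx).deriv, (hderiv y hy).deriv]
      have hxx : (0:ℝ) < x * (1 - x) := by nlinarith [hx.1, hx.2]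
      have hyy : (0:ℝ) < y * (1 - y) := by nlinarith [hy.1, hy.2]
      have hle : x * (1 - x) ≤ y * (1 - y) := by nlinarith [hx.1, hx.2, hy.1, hy.2]
      have := Real.log_le_log hxx hle
      rw [Real.log_mul (ne_of_gt hx.1) (by nlinarith [hx.2] : (1:ℝ) - x ≠ 0)] at this
      rw [Real.log_mul (ne_of_gt hy.1) (by nlinarith [hy.2] : (1:ℝ) - y ≠ 0)] at this
      linarith
  have h0 : φ 0 = 0 := by simp [hφdef]
  have h12 : φ (1/2) = 0 := by norm_num [hφdef]
  have key : 0 ≤ φ d := by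
    have hmem0 : (0:ℝ) ∈ Set.Icc (0:ℝ) (1/2) := by norm_num
    have hmem1 : (1/2:ℝ) ∈ Set.Icc (0:ℝ) (1/2) := by norm_num
    have := hconc.2 hmem0 hmem1 (show (0:ℝ) ≤ 1 - 2*d by linarith) (show (0:ℝ) ≤ 2*d by linarith) (show (1 - 2*d) + 2*d = (1:ℝ) by ring)
    rw [h0, h12] at this
    simp only [smul_eq_mul] at this
    have heq : (1 - 2*d) * 0 + 2*d * (1/2 : ℝ) = d := by ring
    rw [heq] at this
    simpa using this
  have : negMulLog d - negMulLog (1 - d) = φ d := rfl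
  linarith [key]
/-- hard direction: η x − η (x+d) ≤ η d when d ≤ 1/2, x+d ≤ 1. -/
lemma eta_sub_le {x d : ℝ} (hx : 0 ≤ x) (hd0 : 0 ≤ d) (hd : d ≤ 1/2) (hxd : x + d ≤ 1) :
    negMulLog x - negMulLog (x + d) ≤ negMulLog d := by
  set g : ℝ → ℝ := fun y => negMulLog y - negMulLog (y + d) with hgdef
  have hderiv : ∀ y ∈ Set.Ioo (0:ℝ) (1 - d), HasDerivAt g (Real.log (y + d) - Real.log y) y := by
    intro y hy
    have hy0 : y ≠ 0 := ne_of_gt hy.1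
    have hyd : y + d ≠ 0 := ne_of_gt (by linarith [hy.1])
    have h1 : HasDerivAt negMulLog (-Real.log y - 1) y := hasDerivAt_negMulLog hy0
    have hin : HasDerivAt (fun z : ℝ => z + d) 1 y := (hasDerivAt_id y).add_const d
    have h2 : HasDerivAt (fun z => negMulLog (z + d)) ((-Real.log (y + d) - 1) * 1) y :=
      HasDerivAt.comp (h₂ := negMulLog) y (hasDerivAt_negMulLog hyd) hin
    have := h1.sub h2
    exact this.congr_deriv (by ring)
  have hmono : MonotoneOn g (Set.Icc (0:ℝ) (1 - d)) := by
    apply monotoneOn_of_deriv_nonneg (convex_Icc _ _)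
    · apply Continuous.continuousOn; fun_prop
    · rw [interior_Icc]
      intro y hy
      exact ((hderiv y hy).differentiableAt).differentiableWithinAt
    · rw [interior_Icc]
      intro y hy
      rw [(hderiv y hy).deriv]
      have := Real.log_le_log hy.1 (by linarith : y ≤ y + d)
      linarith
  have hg : g x ≤ g (1 - d) :=
    hmono (Set.mem_Icc.mpr ⟨hx, by linarith⟩) (Set.mem_Icc.mpr ⟨by linarith, le_refl _⟩)
      (by linarith)
  have hg1 : g (1 - d) = negMulLog (1 - d) := by
    simp [hgdef]
  have := eta_one_sub_le hd0 hd
  simp only [hgdef] at hg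
  have h1d : (1 - d + d : ℝ) = 1 := by ring
  rw [h1d, Real.negMulLog_one] at hg
  linarith

/-- pointwise Fannes bound -/
lemma abs_eta_sub_le {x y : ℝ} (hx0 : 0 ≤ x) (hx1 : x ≤ 1) (hy0 : 0 ≤ y) (hy1 : y ≤ 1)
    (hd : |x - y| ≤ 1/2) : |negMulLog x - negMulLog y| ≤ negMulLog |x - y| := by
  rcases le_total x y with h | h
  · have hxy : |x - y| = y - x := by rw [abs_sub_comm]; exact abs_of_nonneg (by linarith)
    rw [hxy] at hd ⊢
    have hsub : negMulLog y ≤ negMulLog x + negMulLog (y - x) := by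
      have := eta_subadd hx0 (by linarith : (0:ℝ) ≤ y - x) (by linarith : x + (y - x) ≤ 1)
      simpa using this
    have hsub2 : negMulLog x - negMulLog y ≤ negMulLog (y - x) := by
      have := eta_sub_le hx0 (by linarith : (0:ℝ) ≤ y - x) hd (by linarith : x + (y - x) ≤ 1)
      simpa using this
    rw [abs_le]
    constructor <;> linarith
  · have hxy : |x - y| = x - y := abs_of_nonneg (by linarith)
    rw [hxy] at hd ⊢
    have hsub : negMulLog x ≤ negMulLog y + negMulLog (x - y) := by
      have := eta_subadd hy0 (by linarith : (0:ℝ) ≤ x - y) (by linarith : y + (x - y) ≤ 1)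
      simpa using this
    have hsub2 : negMulLog y - negMulLog x ≤ negMulLog (x - y) := by
      have := eta_sub_le hy0 (by linarith : (0:ℝ) ≤ x - y) hd (by linarith : y + (x - y) ≤ 1)
      simpa using this
    rw [abs_le]
    constructor <;> linarith

/-- η t ≤ 1/e for t ≥ 0 -/
lemma eta_le_inv_e {t : ℝ} (ht : 0 ≤ t) : negMulLog t ≤ (Real.exp 1)⁻¹ := by
  rcases eq_or_lt_of_le ht with h | h
  · simp [← h]; positivity
  · have hpos : (0:ℝ) < (Real.exp 1 * t)⁻¹ := by positivity
    have hlog : Real.log ((Real.exp 1 * t)⁻¹) ≤ (Real.exp 1 * t)⁻¹ - 1 :=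
      Real.log_le_sub_one_of_pos hpos
    rw [Real.log_inv, Real.log_mul (by positivity) (ne_of_gt h), Real.log_exp] at hlog
    -- -(1 + log t) ≤ (e t)⁻¹ - 1, so -log t ≤ (e t)⁻¹, so t * (-log t) ≤ e⁻¹
    have h2 : -Real.log t ≤ (Real.exp 1 * t)⁻¹ := by linarith
    have h3 : t * (-Real.log t) ≤ t * (Real.exp 1 * t)⁻¹ :=
      mul_le_mul_of_nonneg_left h2 ht
    have h4 : t * (Real.exp 1 * t)⁻¹ = (Real.exp 1)⁻¹ := by
      field_simp
    rw [Real.negMulLog]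
    nlinarith [h3, h4]

/-- η θ ≤ c(−log c) + c/e for 0 ≤ θ ≤ c ≤ 1, c > 0 -/
lemma eta_le_of_le {θ c : ℝ} (hθ0 : 0 ≤ θ) (hθc : θ ≤ c) (hc1 : c ≤ 1) (hc0 : 0 < c) :
    negMulLog θ ≤ c * (-Real.log c) + c * (Real.exp 1)⁻¹ := by
  set t := θ / c with htdef
  have ht0 : 0 ≤ t := by positivity
  have ht1 : t ≤ 1 := by rw [htdef, div_le_one hc0]; exact hθc
  have hθeq : θ = c * t := by rw [htdef]; field_simp
  rw [hθeq, Real.negMulLog_mul]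
  have h1 : t * negMulLog c ≤ c * (-Real.log c) := by
    have : negMulLog c = c * (-Real.log c) := by rw [Real.negMulLog]; ring
    rw [this]
    have hnn : 0 ≤ c * (-Real.log c) := by
      have : Real.log c ≤ 0 := Real.log_nonpos (le_of_lt hc0) hc1
      nlinarith
    nlinarith
  have h2 : c * negMulLog t ≤ c * (Real.exp 1)⁻¹ :=
    mul_le_mul_of_nonneg_left (eta_le_inv_e ht0) (le_of_lt hc0)
  linarith


/-- Σ η(θ b) ≤ η(Σ θ) + (Σ θ) log M -/
lemma sum_eta_le {β : Type} [Fintype β] [Nonempty β] (θ : β → ℝ) (hθ : ∀ b, 0 ≤ θ b) :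
    ∑ b, negMulLog (θ b) ≤
      negMulLog (∑ b, θ b) + (∑ b, θ b) * Real.log (Fintype.card β) := by
  set M : ℝ := (Fintype.card β : ℝ) with hM
  have hM0 : (0:ℝ) < M := by
    rw [hM]; exact_mod_cast Fintype.card_pos
  -- termwise: η(θ b) = θ b * log M + (1/M) * η(M * θ b)
  have hterm : ∀ b, negMulLog (θ b) = θ b * Real.log M + M⁻¹ * negMulLog (M * θ b) := by
    intro b
    have : θ b = M⁻¹ * (M * θ b) := by field_simp
    rw [this, Real.negMulLog_mul]
    have hηinv : negMulLog M⁻¹ = M⁻¹ * Real.log M := by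
      rw [Real.negMulLog, Real.log_inv]; ring
    rw [hηinv]
    field_simp
  -- Jensen
  have hjensen : ∑ b, M⁻¹ * negMulLog (M * θ b) ≤ negMulLog (∑ b, θ b) := by
    have hconc := Real.concaveOn_negMulLog
    have := hconc.le_map_sum (t := (univ : Finset β)) (w := fun _ => M⁻¹)
      (p := fun b => M * θ b)
      (fun i _ => by positivity)
      (by
        rw [Finset.sum_const, Finset.card_univ, nsmul_eq_mul, ← hM]
        field_simp)
      (fun i _ => by have := hθ i; simp [Set.mem_Ici]; positivity)
    simp only [smul_eq_mul] at this
    have heq : ∑ b, M⁻¹ * (M * θ b) = ∑ b, θ b := by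
      apply Finset.sum_congr rfl; intro b _; field_simp
    rwa [heq] at this
  calc ∑ b, negMulLog (θ b)
      = ∑ b, (θ b * Real.log M + M⁻¹ * negMulLog (M * θ b)) := by
        exact Finset.sum_congr rfl (fun b _ => hterm b)
    _ = (∑ b, θ b) * Real.log M + ∑ b, M⁻¹ * negMulLog (M * θ b) := by
        rw [Finset.sum_add_distrib, Finset.sum_mul]
    _ ≤ (∑ b, θ b) * Real.log M + negMulLog (∑ b, θ b) := by linarith
    _ = negMulLog (∑ b, θ b) + (∑ b, θ b) * Real.log M := by ring
end AuxAnalytic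

open Real Finset

/-- natural-log entropy -/
def He {α : Type} [Fintype α] (q : α → ℝ) : ℝ := ∑ a, Real.negMulLog (q a)

lemma H2_eq_He {α : Type} [Fintype α] (q : α → ℝ) : H2 q = He q / Real.log 2 := by
  rw [H2, He, Finset.sum_div, ← Finset.sum_neg_distrib]
  apply Finset.sum_congr rfl
  intro a _
  rw [Real.logb, Real.negMulLog]
  ring

lemma lawOf_nonneg {Ω α : Type} [Fintype Ω] [DecidableEq α] {p : Ω → ℝ}
    (hp : ∀ ω, 0 ≤ p ω) (f : Ω → α) (a : α) : 0 ≤ lawOf p f a := by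
  apply Finset.sum_nonneg
  intro ω _
  split <;> simp [hp ω]

lemma lawOf_isPmf {Ω α : Type} [Fintype Ω] [Fintype α] [DecidableEq α] {p : Ω → ℝ}
    (hp : IsPmf p) (f : Ω → α) : IsPmf (lawOf p f) := by
  constructor
  · exact lawOf_nonneg hp.1 f
  · rw [show ∑ a, lawOf p f a = ∑ a, ∑ ω, if f ω = a then p ω else 0 from rfl,
      Finset.sum_comm]
    rw [← hp.2]
    apply Finset.sum_congr rfl
    intro ω _
    rw [Finset.sum_ite_eq (Finset.univ) (f ω) (fun _ => p ω)]
    simp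

lemma pmf_le_one {α : Type} [Fintype α] {q : α → ℝ} (hq : IsPmf q) (a : α) : q a ≤ 1 := by
  rw [← hq.2]
  exact Finset.single_le_sum (fun i _ => hq.1 i) (Finset.mem_univ a)

/-- marginal TV bound: Σ_a |law p f a − law q f a| ≤ Σ_ω |p ω − q ω| -/
lemma sum_abs_lawOf_sub_le {Ω α : Type} [Fintype Ω] [Fintype α] [DecidableEq α]
    (p q : Ω → ℝ) (f : Ω → α) :
    ∑ a, |lawOf p f a - lawOf q f a| ≤ ∑ ω, |p ω - q ω| := by
  have hdiff : ∀ a, lawOf p f a - lawOf q f a = ∑ ω, if f ω = a then p ω - q ω else 0 := by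
    intro a
    rw [lawOf, lawOf, ← Finset.sum_sub_distrib]
    apply Finset.sum_congr rfl
    intro ω _
    split <;> simp
  calc ∑ a, |lawOf p f a - lawOf q f a|
      = ∑ a, |∑ ω, if f ω = a then p ω - q ω else 0| := by
        exact Finset.sum_congr rfl (fun a _ => by rw [hdiff a])
    _ ≤ ∑ a, ∑ ω, |if f ω = a then p ω - q ω else 0| :=
        Finset.sum_le_sum (fun a _ => Finset.abs_sum_le_sum_abs _ _)
    _ = ∑ ω, ∑ a, |if f ω = a then p ω - q ω else 0| := Finset.sum_comm
    _ = ∑ ω, |p ω - q ω| := by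
        apply Finset.sum_congr rfl
        intro ω _
        have : ∀ a, |if f ω = a then p ω - q ω else 0| = if f ω = a then |p ω - q ω| else 0 := by
          intro a; split <;> simp
        rw [Finset.sum_congr rfl (fun a _ => this a),
          Finset.sum_ite_eq (Finset.univ) (f ω) (fun _ => |p ω - q ω|)]
        simp

/-- lawOf under injective relabeling -/
lemma lawOf_comp_apply {Ω α β : Type} [Fintype Ω] [DecidableEq α] [DecidableEq β]
    (p : Ω → ℝ) (X : Ω → α) {e : α → β} (he : Function.Injective e) (a : α) :
    lawOf p (fun ω => e (X ω)) (e a) = lawOf p X a := by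
  apply Finset.sum_congr rfl
  intro ω _
  congr 1
  simp [he.eq_iff]

lemma lawOf_comp_notMem {Ω α β : Type} [Fintype Ω] [DecidableEq α] [DecidableEq β]
    (p : Ω → ℝ) (X : Ω → α) (e : α → β) (b : β) (hb : ∀ a, e a ≠ b) :
    lawOf p (fun ω => e (X ω)) b = 0 := by
  apply Finset.sum_eq_zero
  intro ω _
  simp [hb (X ω)]

/-- entropy invariance under injective relabeling -/
lemma ent_comp_inj {Ω α β : Type} [Fintype Ω] [Fintype α] [Fintype β]
    [DecidableEq α] [DecidableEq β]
    (p : Ω → ℝ) (X : Ω → α) {e : α → β} (he : Function.Injective e) :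
    ent p (fun ω => e (X ω)) = ent p X := by
  rw [ent, ent, H2, H2]
  congr 1
  set F : β → ℝ := fun b => lawOf p (fun ω => e (X ω)) b * Real.logb 2 (lawOf p (fun ω => e (X ω)) b) with hF
  calc ∑ b, F b
      = ∑ b ∈ Finset.image e univ, F b := by
        symm
        apply Finset.sum_subset (Finset.subset_univ _)
        intro b _ hb
        have : ∀ a, e a ≠ b := by
          intro a h
          exact hb (Finset.mem_image.mpr ⟨a, Finset.mem_univ a, h⟩)
        rw [hF]
        simp only [lawOf_comp_notMem p X e b this]
        simp
    _ = ∑ a, F (e a) := Finset.sum_image (fun a _ b _ h => he h)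
    _ = ∑ a, lawOf p X a * Real.logb 2 (lawOf p X a) := by
        apply Finset.sum_congr rfl
        intro a _
        rw [hF]
        simp only [lawOf_comp_apply p X he a]

section Chain
variable {𝒲 : Type} [Fintype 𝒲] [DecidableEq 𝒲] {n : ℕ}

/-- prefix random variable -/
def Zpre (p : (Fin n → 𝒲) → ℝ) (k : ℕ) (hk : k ≤ n) : (Fin n → 𝒲) → (Fin k → 𝒲) :=
  fun w s => w ⟨s.1, lt_of_lt_of_le s.2 hk⟩

lemma ent_Zpre_zero (p : (Fin n → 𝒲) → ℝ) (hp : IsPmf p) (h : 0 ≤ n) :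
    ent p (Zpre p 0 h) = 0 := by
  have hlaw : lawOf p (Zpre p 0 h) = fun _ => 1 := by
    funext a
    rw [lawOf]
    have : ∀ w : Fin n → 𝒲, Zpre p 0 h w = a := fun w => Subsingleton.elim _ _
    simp only [this, if_true]
    exact hp.2
  rw [ent, hlaw, H2]
  simp

lemma ent_Zpre_top (p : (Fin n → 𝒲) → ℝ) (h : n ≤ n) :
    ent p (Zpre p n h) = H2 p := by
  have hZ : Zpre p n h = fun w => w := by
    funext w s
    rfl
  rw [ent, hZ]
  have hlaw : lawOf p (fun w => w) = p := by
    funext a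
    rw [lawOf]
    rw [Finset.sum_ite_eq' Finset.univ a p]
    simp
  rw [hlaw]

/-- the pair (W_t, W^{<t}) is a relabeling of the (t+1)-prefix -/
lemma ent_pair_eq (p : (Fin n → 𝒲) → ℝ) (t : Fin n) :
    ent p (fun w => (w t, fun s : Fin t.1 => w ⟨s.1, s.2.trans t.2⟩))
      = ent p (Zpre p (t.1 + 1) (Nat.succ_le_of_lt t.2)) := by
  set e : (Fin (t.1 + 1) → 𝒲) → 𝒲 × (Fin t.1 → 𝒲) :=
    fun g => (g ⟨t.1, Nat.lt_succ_self _⟩, fun s => g ⟨s.1, Nat.lt_succ_of_lt s.2⟩) with he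
  have hinj : Function.Injective e := by
    intro g g' h
    have h1 : g ⟨t.1, Nat.lt_succ_self _⟩ = g' ⟨t.1, Nat.lt_succ_self _⟩ := congrArg Prod.fst h
    have h2 : (fun s : Fin t.1 => g ⟨s.1, Nat.lt_succ_of_lt s.2⟩)
        = fun s : Fin t.1 => g' ⟨s.1, Nat.lt_succ_of_lt s.2⟩ := congrArg Prod.snd h
    funext u
    rcases Nat.lt_succ_iff_lt_or_eq.mp u.2 with hu | hu
    · exact congrFun h2 ⟨u.1, hu⟩
    · have : u = ⟨t.1, Nat.lt_succ_self _⟩ := Fin.ext hu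
      rw [this]
      exact h1
  have hcomp : (fun w : Fin n → 𝒲 => (w t, fun s : Fin t.1 => w ⟨s.1, s.2.trans t.2⟩))
      = fun w => e (Zpre p (t.1 + 1) (Nat.succ_le_of_lt t.2) w) := rfl
  rw [hcomp, ent_comp_inj p _ hinj]

lemma sum_mi_eq (p : (Fin n → 𝒲) → ℝ) (hp : IsPmf p) :
    ∑ t : Fin n,
        mi p (fun w => w t) (fun w => fun s : Fin t.1 => w ⟨s.1, s.2.trans t.2⟩)
      = (∑ t : Fin n, ent p (fun w => w t)) - H2 p := by
  set f : ℕ → ℝ := fun k => if h : k ≤ n then ent p (Zpre p k h) else 0 with hf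
  have hterm : ∀ t : Fin n,
      mi p (fun w => w t) (fun w => fun s : Fin t.1 => w ⟨s.1, s.2.trans t.2⟩)
        = ent p (fun w => w t) + (f t.1 - f (t.1 + 1)) := by
    intro t
    rw [mi]
    have e1 : ent p (fun w : Fin n → 𝒲 => fun s : Fin t.1 => w ⟨s.1, s.2.trans t.2⟩)
        = f t.1 := by
      rw [hf]
      beta_reduce
      rw [dif_pos (le_of_lt t.2)]
      rfl
    have e2 : ent p (fun w : Fin n → 𝒲 => (w t, fun s : Fin t.1 => w ⟨s.1, s.2.trans t.2⟩))
        = f (t.1 + 1) := by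
      rw [hf]
      beta_reduce
      rw [dif_pos (Nat.succ_le_of_lt t.2)]
      exact ent_pair_eq p t
    rw [e1, e2]
    ring
  rw [Finset.sum_congr rfl (fun t _ => hterm t), Finset.sum_add_distrib]
  have htel : ∑ t : Fin n, (f t.1 - f (t.1 + 1)) = f 0 - f n := by
    rw [Fin.sum_univ_eq_sum_range (fun i => f i - f (i + 1)) n]
    exact Finset.sum_range_sub' f n
  rw [htel, hf]
  beta_reduce
  rw [dif_pos (Nat.zero_le n), dif_pos (le_refl n)]
  rw [ent_Zpre_zero p hp (Nat.zero_le n), ent_Zpre_top p (le_refl n)]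
  ring
end Chain

section Product
open Real Finset
variable {𝒲 : Type} [Fintype 𝒲] [DecidableEq 𝒲] {n : ℕ}

lemma negMulLog_prod {ι : Type} [DecidableEq ι] (s : Finset ι) (f : ι → ℝ) :
    Real.negMulLog (∏ i ∈ s, f i)
      = ∑ i ∈ s, (∏ j ∈ s.erase i, f j) * Real.negMulLog (f i) := by
  induction s using Finset.induction_on with
  | empty => simp
  | @insert a s ha ih =>
      have hrw : ∀ i ∈ s, (∏ j ∈ (insert a s).erase i, f j) * Real.negMulLog (f i)
          = f a * ((∏ j ∈ s.erase i, f j) * Real.negMulLog (f i)) := by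
        intro i hi
        have hia : i ≠ a := fun h => ha (h ▸ hi)
        rw [Finset.erase_insert_of_ne hia.symm,
          Finset.prod_insert (fun h => ha (Finset.mem_of_mem_erase h))]
        ring
      rw [Finset.prod_insert ha, Real.negMulLog_mul, Finset.sum_insert ha,
        Finset.erase_insert ha, Finset.sum_congr rfl hrw, ← Finset.mul_sum, ← ih]

omit [DecidableEq 𝒲] in
lemma prodQ_isPmf (Q : 𝒲 → ℝ) (hQ : IsPmf Q) :
    IsPmf (fun w : Fin n → 𝒲 => ∏ t, Q (w t)) := by
  constructor
  · intro w
    exact Finset.prod_nonneg (fun t _ => hQ.1 _)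
  · rw [← Fintype.piFinset_univ, ← Finset.prod_univ_sum]
    simp [hQ.2]

lemma lawOf_prodQ (Q : 𝒲 → ℝ) (hQ : IsPmf Q) (t : Fin n) :
    lawOf (fun w : Fin n → 𝒲 => ∏ s, Q (w s)) (fun w => w t) = Q := by
  funext a
  rw [lawOf]
  set F : Fin n → 𝒲 → ℝ :=
    fun s j => if s = t then (if j = a then Q j else 0) else Q j with hF
  have hterm : ∀ w : Fin n → 𝒲,
      (if w t = a then ∏ s, Q (w s) else 0) = ∏ s, F s (w s) := by
    intro w
    by_cases h : w t = a
    · rw [if_pos h,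
        ← Finset.mul_prod_erase Finset.univ (fun s => Q (w s)) (Finset.mem_univ t),
        ← Finset.mul_prod_erase Finset.univ (fun s => F s (w s)) (Finset.mem_univ t)]
      have h1 : F t (w t) = Q (w t) := by
        rw [show F t (w t) = if w t = a then Q (w t) else 0 from if_pos rfl, if_pos h]
      have h2 : ∏ s ∈ Finset.univ.erase t, F s (w s)
          = ∏ s ∈ Finset.univ.erase t, Q (w s) := by
        apply Finset.prod_congr rfl
        intro s hs
        rw [hF]
        simp [Finset.ne_of_mem_erase hs]
      rw [h1, h2]
    · rw [if_neg h]
      symm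
      apply Finset.prod_eq_zero (Finset.mem_univ t)
      rw [hF]
      simp [h]
  have hswap := Finset.prod_univ_sum (fun _ : Fin n => (Finset.univ : Finset 𝒲)) F
  rw [Fintype.piFinset_univ] at hswap
  rw [Finset.sum_congr rfl (fun w _ => hterm w), ← hswap]
  rw [Finset.prod_eq_single_of_mem t (Finset.mem_univ t)]
  · have hFt : ∀ j : 𝒲, F t j = if j = a then Q j else 0 := fun j => if_pos rfl
    have hflip : ∀ j : 𝒲, (if j = a then Q j else 0) = if a = j then Q j else 0 := by
      intro j
      by_cases h : j = a
      · simp [h]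
      · rw [if_neg h, if_neg (fun hh => h hh.symm)]
    rw [Finset.sum_congr rfl (fun j _ => (hFt j).trans (hflip j)),
      Finset.sum_ite_eq Finset.univ a Q]
    simp
  · intro s _ hs
    rw [show (∑ j, F s j) = ∑ j, Q j by
      apply Finset.sum_congr rfl; intro j _; rw [hF]; simp [hs]]
    exact hQ.2

omit [DecidableEq 𝒲] in
lemma He_prodQ (Q : 𝒲 → ℝ) (hQ : IsPmf Q) :
    He (fun w : Fin n → 𝒲 => ∏ t, Q (w t)) = n * He Q := by
  rw [He]
  have hterm : ∀ w : Fin n → 𝒲,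
      Real.negMulLog (∏ t, Q (w t))
        = ∑ t, (∏ r ∈ Finset.univ.erase t, Q (w r)) * Real.negMulLog (Q (w t)) :=
    fun w => negMulLog_prod Finset.univ (fun t => Q (w t))
  rw [Finset.sum_congr rfl (fun w _ => hterm w), Finset.sum_comm]
  have hinner : ∀ t : Fin n,
      ∑ w : Fin n → 𝒲, (∏ r ∈ Finset.univ.erase t, Q (w r)) * Real.negMulLog (Q (w t))
        = He Q := by
    intro t
    set F : Fin n → 𝒲 → ℝ :=
      fun r j => if r = t then Real.negMulLog (Q j) else Q j with hF
    have hterm2 : ∀ w : Fin n → 𝒲,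
        (∏ r ∈ Finset.univ.erase t, Q (w r)) * Real.negMulLog (Q (w t))
          = ∏ r, F r (w r) := by
      intro w
      rw [← Finset.mul_prod_erase Finset.univ (fun r => F r (w r)) (Finset.mem_univ t)]
      have h1 : F t (w t) = Real.negMulLog (Q (w t)) := if_pos rfl
      have h2 : ∏ r ∈ Finset.univ.erase t, F r (w r)
          = ∏ r ∈ Finset.univ.erase t, Q (w r) := by
        apply Finset.prod_congr rfl
        intro s hs
        rw [hF]
        simp [Finset.ne_of_mem_erase hs]
      rw [h1, h2]
      ring
    have hswap := Finset.prod_univ_sum (fun _ : Fin n => (Finset.univ : Finset 𝒲)) F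
    rw [Fintype.piFinset_univ] at hswap
    rw [Finset.sum_congr rfl (fun w _ => hterm2 w), ← hswap]
    rw [Finset.prod_eq_single_of_mem t (Finset.mem_univ t)]
    · have hFt : ∀ j : 𝒲, F t j = Real.negMulLog (Q j) := fun j => if_pos rfl
      rw [Finset.sum_congr rfl (fun j _ => hFt j)]
      rfl
    · intro s _ hs
      rw [show (∑ j, F s j) = ∑ j, Q j by
        apply Finset.sum_congr rfl; intro j _; rw [hF]; simp [hs]]
      exact hQ.2
  rw [Finset.sum_congr rfl (fun t _ => hinner t)]
  simp [Finset.card_univ, mul_comm]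
end Product

open Real Finset in
/-- Fannes-type inequality (natural log). -/
lemma fannes {β : Type} [Fintype β] [Nonempty β] {u v : β → ℝ} (hu : IsPmf u) (hv : IsPmf v)
    (hhalf : ∑ b, |u b - v b| ≤ 1/2) :
    |He u - He v| ≤ Real.negMulLog (∑ b, |u b - v b|)
      + (∑ b, |u b - v b|) * Real.log (Fintype.card β) := by
  have hbnd : ∀ b, |u b - v b| ≤ 1/2 := fun b =>
    le_trans (Finset.single_le_sum (f := fun b => |u b - v b|) (fun i _ => abs_nonneg _) (Finset.mem_univ b)) hhalf
  have h1 : |He u - He v| ≤ ∑ b, |Real.negMulLog (u b) - Real.negMulLog (v b)| := by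
    rw [He, He, ← Finset.sum_sub_distrib]
    exact Finset.abs_sum_le_sum_abs _ _
  have h2 : ∑ b, |Real.negMulLog (u b) - Real.negMulLog (v b)|
      ≤ ∑ b, Real.negMulLog |u b - v b| :=
    Finset.sum_le_sum (fun b _ =>
      abs_eta_sub_le (hu.1 b) (pmf_le_one hu b) (hv.1 b) (pmf_le_one hv b) (hbnd b))
  have h3 := sum_eta_le (fun b => |u b - v b|) (fun b => abs_nonneg _)
  linarith

/-- **Entropy bound from total variation (Lemma VI.3 of Cuff, first part).**
If `‖P_{W^n} − ∏_t Q_W‖_TV = ε ∈ (0,1/4)`, then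
`Σ_{t=1}^n I(W_t; W^{t−1}) ≤ n · g(ε)` with `g(ε) = 4ε log(|𝒲|/ε)`. -/
theorem sum_mutual_info_past_le
    {𝒲 : Type} [Fintype 𝒲] [DecidableEq 𝒲] [Nonempty 𝒲]
    (n : ℕ) (p : (Fin n → 𝒲) → ℝ) (Q : 𝒲 → ℝ)
    (hp : IsPmf p) (hQ : IsPmf Q) (ε : ℝ) (hε : ε ∈ Set.Ioo (0 : ℝ) (1 / 4))
    (hTV : TV p (fun w => ∏ t, Q (w t)) = ε) :
    ∑ t : Fin n,
        mi p (fun w => w t) (fun w => fun s : Fin t.1 => w ⟨s.1, s.2.trans t.2⟩)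
      ≤ (n : ℝ) * (4 * ε * Real.logb 2 ((Fintype.card 𝒲 : ℝ) / ε)) := by
  obtain ⟨hε0, hε14⟩ := hε
  rcases Nat.eq_zero_or_pos n with hn | hn
  · subst hn
    simp
  -- basic quantities
  have hn1 : (1 : ℝ) ≤ (n : ℝ) := by exact_mod_cast hn
  set q : (Fin n → 𝒲) → ℝ := fun w => ∏ t, Q (w t) with hqdef
  have hq : IsPmf q := prodQ_isPmf Q hQ
  set M : ℕ := Fintype.card 𝒲 with hMdef
  have hM1 : (1 : ℝ) ≤ (M : ℝ) := by exact_mod_cast Fintype.card_pos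
  have hlogM : (0:ℝ) ≤ Real.log M := Real.log_nonneg hM1
  set c : ℝ := 2 * ε with hcdef
  have hc0 : 0 < c := by positivity
  have hc12 : c ≤ 1/2 := by rw [hcdef]; linarith
  have hc1 : c ≤ 1 := by linarith
  have h2ε : ∑ w, |p w - q w| = c := by
    rw [TV] at hTV
    rw [hcdef]
    linarith
  have hlog2 : (0:ℝ) < Real.log 2 := Real.log_pos one_lt_two
  have hx : (0:ℝ) < -Real.log ε := by
    have : Real.log ε < 0 := Real.log_neg hε0 (by linarith)
    linarith
  have hx2 : 2 * Real.log 2 ≤ -Real.log ε := by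
    have h4 : Real.log ε ≤ Real.log (1/4) := Real.log_le_log hε0 (le_of_lt hε14)
    have : Real.log (1/4 : ℝ) = -(2 * Real.log 2) := by
      rw [show (1/4 : ℝ) = (2:ℝ)⁻¹ ^ 2 by norm_num, Real.log_pow, Real.log_inv]
      push_cast
      ring
    rw [this] at h4
    linarith
  have hlogc : -Real.log c = -Real.log 2 - Real.log ε := by
    rw [hcdef, Real.log_mul (by norm_num) (ne_of_gt hε0)]
    ring
  have hei : (Real.exp 1)⁻¹ ≤ Real.log 2 := by
    have he : (2.7182818283 : ℝ) < Real.exp 1 := Real.exp_one_gt_d9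
    have hl : (0.6931471803 : ℝ) < Real.log 2 := Real.log_two_gt_d9
    have : (Real.exp 1)⁻¹ ≤ (2.7182818283 : ℝ)⁻¹ := by
      apply inv_anti₀ (by norm_num) (le_of_lt he)
    have h271 : ((2.7182818283 : ℝ))⁻¹ ≤ 0.6931471803 := by norm_num
    linarith
  set B : ℝ := c * (-Real.log c) + c * (Real.exp 1)⁻¹ with hBdef
  -- per-coordinate entropy bound
  have hper : ∀ t : Fin n, He (lawOf p (fun w => w t)) ≤ He Q + (B + c * Real.log M) := by
    intro t
    have hlawq := lawOf_prodQ (n := n) Q hQ t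
    have hθle : ∑ b, |lawOf p (fun w => w t) b - Q b| ≤ c := by
      calc ∑ b, |lawOf p (fun w => w t) b - Q b|
          = ∑ b, |lawOf p (fun w => w t) b - lawOf q (fun w => w t) b| := by
            rw [hlawq]
        _ ≤ ∑ w, |p w - q w| := sum_abs_lawOf_sub_le p q (fun w => w t)
        _ = c := h2ε
    have hθ0 : 0 ≤ ∑ b, |lawOf p (fun w => w t) b - Q b| :=
      Finset.sum_nonneg (fun b _ => abs_nonneg _)
    have hf := fannes (lawOf_isPmf hp (fun w => w t)) hQ (le_trans hθle hc12)
    have hη := eta_le_of_le hθ0 hθle hc1 hc0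
    have hlin : (∑ b, |lawOf p (fun w => w t) b - Q b|) * Real.log M ≤ c * Real.log M :=
      mul_le_mul_of_nonneg_right hθle hlogM
    rw [abs_le] at hf
    rw [hBdef]
    have := hf.2
    rw [← hMdef] at this
    linarith
  -- joint entropy bound
  have hjoint : (n : ℝ) * He Q - (B + c * ((n:ℝ) * Real.log M)) ≤ He p := by
    have hcard : (Fintype.card (Fin n → 𝒲) : ℝ) = (M : ℝ) ^ n := by
      rw [Fintype.card_fun, Fintype.card_fin]
      push_cast
      ring
    have hf := fannes hp hq (by rw [h2ε]; exact hc12)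
    rw [h2ε] at hf
    have hηc : Real.negMulLog c ≤ B := by
      rw [hBdef]
      exact eta_le_of_le (le_of_lt hc0) (le_refl c) hc1 hc0
    have hlogcard : Real.log (Fintype.card (Fin n → 𝒲)) = (n:ℝ) * Real.log M := by
      rw [hcard, Real.log_pow]
    rw [abs_le] at hf
    have h1 := hf.1
    rw [hlogcard] at h1
    have hHeq : He q = (n : ℝ) * He Q := He_prodQ Q hQ
    linarith
  -- chain rule
  rw [sum_mi_eq p hp]
  have hent : ∀ t : Fin n, ent p (fun w => w t) = He (lawOf p (fun w => w t)) / Real.log 2 :=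
    fun t => H2_eq_He _
  rw [Finset.sum_congr rfl (fun t _ => hent t), H2_eq_He, ← Finset.sum_div, div_sub_div_same]
  have hrhs : (n : ℝ) * (4 * ε * Real.logb 2 ((M : ℝ) / ε))
      = ((n : ℝ) * (4 * ε * Real.log ((M : ℝ) / ε))) / Real.log 2 := by
    rw [Real.logb]
    ring
  rw [hrhs]
  gcongr
  -- core inequality in natural-log scale
  have hsum : ∑ t : Fin n, He (lawOf p (fun w => w t))
      ≤ (n:ℝ) * (He Q + (B + c * Real.log M)) := by
    calc ∑ t : Fin n, He (lawOf p (fun w => w t))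
        ≤ ∑ _t : Fin n, (He Q + (B + c * Real.log M)) :=
          Finset.sum_le_sum (fun t _ => hper t)
      _ = (n:ℝ) * (He Q + (B + c * Real.log M)) := by
          rw [Finset.sum_const, Finset.card_univ, Fintype.card_fin, nsmul_eq_mul]
  have hlogdiv : Real.log ((M:ℝ) / ε) = Real.log M + (-Real.log ε) := by
    rw [Real.log_div (by linarith : (M:ℝ) ≠ 0) (ne_of_gt hε0)]
    ring
  rw [hlogdiv]
  have hkey : ((n:ℝ) + 1) * B ≤ 2 * (n:ℝ) * (c * (-Real.log ε)) := by
    set x : ℝ := -Real.log ε with hxdef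
    set a : ℝ := Real.log 2 - (Real.exp 1)⁻¹ with hadef
    have ha : 0 ≤ a := by rw [hadef]; linarith
    have hBxa : B = c * (x - a) := by
      rw [hBdef, hlogc, hxdef, hadef]
      ring
    rw [hBxa]
    nlinarith [mul_nonneg (mul_nonneg hc0.le hx.le) (sub_nonneg.mpr hn1),
      mul_nonneg (mul_nonneg hc0.le ha) (by linarith : (0:ℝ) ≤ (n:ℝ) + 1),
      mul_nonneg hc0.le hx.le, mul_nonneg hc0.le ha]
  have hc4 : 4 * ε = 2 * c := by rw [hcdef]; ring
  calc (∑ t : Fin n, He (lawOf p (fun w => w t))) - He p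
      ≤ (n:ℝ) * (He Q + (B + c * Real.log M))
          - ((n : ℝ) * He Q - (B + c * ((n:ℝ) * Real.log M))) := by
        linarith [hsum, hjoint]
    _ = ((n:ℝ) + 1) * B + 2 * (n:ℝ) * (c * Real.log M) := by ring
    _ ≤ 2 * (n:ℝ) * (c * (-Real.log ε)) + 2 * (n:ℝ) * (c * Real.log M) := by
        linarith [hkey]
    _ = (n:ℝ) * (4 * ε * (Real.log M + (-Real.log ε))) := by
        rw [hc4]
        ring

end
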